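/- Work with the model (𝒦,r) = (𝒦_s,r_s) for s sufficiently large. Fix any ε > 0 and α > 2 (both allowed to depend on s). Let a, b', a', b ∈ ℝ² be four collinear points appearing on their common line in this order with |ab'| = |a'b| = s and |b'a'| = (α−2)s. Consider rectangles Γ with dimensions αs × s having ab as a side, Γ_a with dimensions s × εs having ab' as a side, and Γ_b with dimensions s × εs having a'b as a side, such that Γ, Γ_a, Γ_b have pairwise disjoint interiors. Then [Γ ∪ Γ_a ∪ Γ_b] contains all integer points of the smallest rectangle Γ̄ containing Γ ∪ Γ_a ∪ Γ_b. -/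

import Mathlib

open Set MeasureTheory Filter
open scoped RealInnerProductSpace Pointwise ENNReal

noncomputable section

/-- The Euclidean plane. -/
abbrev E : Type := EuclideanSpace ℝ (Fin 2)

/-- The point of the plane with coordinates `(a, b)`. -/
def pt (a b : ℝ) : E := (WithLp.equiv 2 (Fin 2 → ℝ)).symm ![a, b]

/-- The integer lattice `ℤ²` viewed inside the plane. -/
def latt : Set E := {x : E | ∃ a b : ℤ, x = pt a b}

/-- One step of threshold bootstrap percolation on `ℤ²` with neighbourhood `𝒦` and threshold `r`. -/
def step (𝒦 : Set E) (r : ℕ) (A : Set E) : Set E :=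
  A ∪ {x : E | x ∈ latt ∧ r ≤ (((fun k => x + k) '' 𝒦) ∩ A).ncard}

/-- The bootstrap percolation closure `[A]` (of the lattice points of `A`). -/
def bpCl (𝒦 : Set E) (r : ℕ) (A : Set E) : Set E :=
  ⋃ t : ℕ, (step 𝒦 r)^[t] (A ∩ latt)

/-- One step of the bootstrap percolation dynamics restricted to the region `B`. -/
def stepIn (𝒦 : Set E) (r : ℕ) (B A : Set E) : Set E :=
  A ∪ {x : E | x ∈ B ∩ latt ∧ r ≤ (((fun k => x + k) '' 𝒦) ∩ A).ncard}

/-- The closure `[A]_B` of `A` under the dynamics restricted to `B`. -/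
def bpClIn (𝒦 : Set E) (r : ℕ) (B A : Set E) : Set E :=
  ⋃ t : ℕ, (stepIn 𝒦 r B)^[t] (A ∩ latt)

/-- Rotation of the plane by `π/2` around the origin. -/
def rot (x : E) : E := pt (-(x 1)) (x 0)

/-- A "nice" set `K`: convex, invariant under rotation by `π/2` about the origin,
with `max {‖k‖ : k ∈ K} = 1`. -/
structure NiceK (K : Set E) : Prop where
  convex : Convex ℝ K
  rotInv : ∀ x ∈ K, rot x ∈ K
  normMax : IsGreatest ((fun k : E => ‖k‖) '' K) 1

/-- The neighbourhood `𝒦_s = (sK) ∩ ℤ²`. -/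
def Ks (K : Set E) (s : ℝ) : Set E := (s • K) ∩ latt

/-- The threshold `r_s = 1 + min_{u ≠ 0} |{x ∈ 𝒦_s : ⟨x,u⟩ < 0}|`. -/
def rKs (K : Set E) (s : ℝ) : ℕ :=
  1 + sInf ((fun u : E => {x : E | x ∈ Ks K s ∧ (inner ℝ x u : ℝ) < 0}.ncard) '' {u : E | u ≠ 0})

/-- The neighbourhood `𝒦_□` of the two-neighbour model. -/
def Ksq : Set E := {pt 0 0, pt 1 0, pt (-1) 0, pt 0 1, pt 0 (-1)}

/-- The neighbourhood `𝒦_△` of the three-neighbour model on the triangular lattice. -/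
def Ktri : Set E := Ksq ∪ {pt 1 (-1), pt (-1) 1}

/-- The set `𝒮` of stable directions of the model `(𝒦, r)`. -/
def stableDirs (𝒦 : Set E) (r : ℕ) : Set E :=
  {u : E | ‖u‖ = 1 ∧ {x : E | x ∈ 𝒦 ∧ (inner ℝ x u : ℝ) < 0}.ncard < r}

/-- The box `Λ_t = [-t,t]² ∩ ℤ²`. -/
def lam (t : ℝ) : Set E := {x ∈ latt | |x 0| ≤ t ∧ |x 1| ≤ t}

/-- A set `V` is `κ`-connected if any two of its points are joined by a finite
sequence of points of `V` with consecutive points at distance at most `κ`. -/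
def ConnectedWithin (κ : ℝ) (V : Set E) : Prop :=
  ∀ x ∈ V, ∀ y ∈ V, ∃ (k : ℕ) (f : ℕ → E), f 0 = x ∧ f k = y ∧
    (∀ i ≤ k, f i ∈ V) ∧ ∀ i < k, dist (f i) (f (i + 1)) ≤ κ

/-- `A` contains a `κ`-connected set of `14` sites. -/
def HasConn14 (κ : ℝ) (A : Set E) : Prop :=
  ∃ V ⊆ A, ConnectedWithin κ V ∧ V.ncard = 14

/-- Projection of a set of lattice points of the plane to the torus `(ℤ/nℤ)²`. -/
def torSet (n : ℕ) (S : Set E) : Set (ZMod n × ZMod n) :=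
  {p | ∃ a b : ℤ, pt a b ∈ S ∧ p = ((a : ZMod n), (b : ZMod n))}

/-- One step of bootstrap percolation on the torus `(ℤ/nℤ)²`. -/
def stepT (n : ℕ) (𝒦 : Set E) (r : ℕ) (A : Set (ZMod n × ZMod n)) : Set (ZMod n × ZMod n) :=
  A ∪ {x | r ≤ (((fun k => x + k) '' torSet n 𝒦) ∩ A).ncard}

/-- The bootstrap percolation closure on the torus `(ℤ/nℤ)²`. -/
def bpClT (n : ℕ) (𝒦 : Set E) (r : ℕ) (A : Set (ZMod n × ZMod n)) : Set (ZMod n × ZMod n) :=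
  ⋃ t : ℕ, (stepT n 𝒦 r)^[t] A

/-- The set `A(t)` of the first `t` sites of the torus in the order given by `σ`. -/
def Aset (n : ℕ) (σ : (ZMod n × ZMod n) ≃ Fin (n ^ 2)) (t : ℕ) : Set (ZMod n × ZMod n) :=
  {x | (σ x : ℕ) + 1 ≤ t}

/-- The percolation time `τ`. -/
def percTime (n : ℕ) (𝒦 : Set E) (r : ℕ) (σ : (ZMod n × ZMod n) ≃ Fin (n ^ 2)) : ℕ :=
  sInf {t : ℕ | bpClT n 𝒦 r (Aset n σ t) = univ}

/-- The probability (over a uniformly random bijection `σ : 𝕋 → {1,…,n²}`) that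
`|[A(τ-1)]| ≥ τ (1 + C / log n)`. -/
def probBad (𝒦 : Set E) (r : ℕ) (C : ℝ) (n : ℕ) : ℝ :=
  ({σ : (ZMod n × ZMod n) ≃ Fin (n ^ 2) |
      (percTime n 𝒦 r σ : ℝ) * (1 + C / Real.log n) ≤
        ((bpClT n 𝒦 r (Aset n σ (percTime n 𝒦 r σ - 1))).ncard : ℝ)}.ncard : ℝ) /
    (Nat.card ((ZMod n × ZMod n) ≃ Fin (n ^ 2)) : ℝ)

/-- The rectangle with corner `x`, side of length `len` in direction `rot u`
(perpendicular to `u`) and side of length `wid` in direction `u`. -/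
def rectDir (x u : E) (len wid : ℝ) : Set E :=
  {y : E | ∃ a b : ℝ, a ∈ Icc (0 : ℝ) len ∧ b ∈ Icc (0 : ℝ) wid ∧ y = x + a • rot u + b • u}

/-- The axis-parallel square `[a, a+c] × [b, b+c]`. -/
def axSquare (a b c : ℝ) : Set E := {x : E | x 0 ∈ Icc a (a + c) ∧ x 1 ∈ Icc b (b + c)}

/-- Droplets for the family `S` of stable directions: `D = ℤ² ∩ ⋂_{u ∈ S} {⟨·,u⟩ ≤ l_u}`. -/
def IsDropletS (S : Set E) (D : Set E) : Prop :=
  ∃ l : E → ℝ, D = latt ∩ ⋂ u ∈ S, {x : E | (inner ℝ x u : ℝ) ≤ l u}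

/-- The stable directions `𝒮_□` of the two-neighbour model. -/
def Ssq : Set E := {pt 1 0, pt (-1) 0, pt 0 1, pt 0 (-1)}

/-- The stable directions `𝒮_△` of the triangular three-neighbour model. -/
def Stri : Set E :=
  Ssq ∪ {pt ((Real.sqrt 2)⁻¹) ((Real.sqrt 2)⁻¹), pt (-(Real.sqrt 2)⁻¹) (-(Real.sqrt 2)⁻¹)}

/-- A valid choice of infection sets `𝒦_v ⊆ A_t ∩ (𝒦 + v)` of size `r`, one for each
newly infected vertex `v`. -/
def IsInfChoice (𝒦 : Set E) (r : ℕ) (A : Set E) (κ : E → Set E) : Prop :=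
  ∀ t : ℕ, ∀ v ∈ (step 𝒦 r)^[t + 1] (A ∩ latt) \ (step 𝒦 r)^[t] (A ∩ latt),
    κ v ⊆ (step 𝒦 r)^[t] (A ∩ latt) ∩ ((fun k => v + k) '' 𝒦) ∧ (κ v).ncard = r

/-- The out-degree of `u` in the infection graph determined by the choice `κ`. -/
def outDeg (𝒦 : Set E) (r : ℕ) (A : Set E) (κ : E → Set E) (u : E) : ℕ :=
  {v : E | (∃ t : ℕ, v ∈ (step 𝒦 r)^[t + 1] (A ∩ latt) \ (step 𝒦 r)^[t] (A ∩ latt)) ∧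
    u ∈ κ v}.ncard

/-- A vertex of `[A]` is good if its out-degree in the infection graph is at least `0.9 r`. -/
def IsGood (𝒦 : Set E) (r : ℕ) (A : Set E) (κ : E → Set E) (u : E) : Prop :=
  u ∈ bpCl 𝒦 r A ∧ (0.9 : ℝ) * r ≤ (outDeg 𝒦 r A κ u : ℝ)

/-- A fat convex set: bounded, convex, and all vertical and horizontal chords have
length at least `c`. -/
def IsFat (c : ℝ) (P : Set E) : Prop :=
  Convex ℝ P ∧ Bornology.IsBounded P ∧
  (∀ a : ℝ, (P ∩ {p : E | p 0 = a}).Nonempty → c ≤ Metric.diam (P ∩ {p : E | p 0 = a})) ∧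
  (∀ b : ℝ, (P ∩ {p : E | p 1 = b}).Nonempty → c ≤ Metric.diam (P ∩ {p : E | p 1 = b}))

def xmin (P : Set E) : ℝ := sInf ((fun p : E => p 0) '' P)
def xmax (P : Set E) : ℝ := sSup ((fun p : E => p 0) '' P)
def ymin (P : Set E) : ℝ := sInf ((fun p : E => p 1) '' P)
def ymax (P : Set E) : ℝ := sSup ((fun p : E => p 1) '' P)

/-- A convex set is horizontal if its horizontal extent is at least its vertical extent. -/
def IsHorizontal (P : Set E) : Prop := ymax P - ymin P ≤ xmax P - xmin P

/-- The upper boundary function of `P`. -/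
def upperF (P : Set E) (a : ℝ) : ℝ := sSup {y : ℝ | pt a y ∈ P}

/-- The lower boundary function of `P`. -/
def lowerF (P : Set E) (a : ℝ) : ℝ := sInf {y : ℝ | pt a y ∈ P}

/-- Slopes of tangent (supporting) lines to the upper boundary of `P` at abscissa `a`. -/
def upperSlopes (P : Set E) (a : ℝ) : Set ℝ :=
  {m : ℝ | ∀ t : ℝ, {y : ℝ | pt t y ∈ P}.Nonempty → upperF P t ≤ upperF P a + m * (t - a)}

/-- Slopes of tangent (supporting) lines to the lower boundary of `P` at abscissa `a`. -/
def lowerSlopes (P : Set E) (a : ℝ) : Set ℝ :=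
  {m : ℝ | ∀ t : ℝ, {y : ℝ | pt t y ∈ P}.Nonempty → lowerF P a + m * (t - a) ≤ lowerF P t}

/-- The vertical chord `P_{1,a}` is admissible: the tangent angles at the chord are in
`[-4π/9, 4π/9]` and the tangent slopes barely change at horizontal distance `C₄ s`. -/
def IsAdmissible (C₃ C₄ s : ℝ) (P : Set E) (a : ℝ) : Prop :=
  xmin P + C₄ * s < a ∧ a < xmax P - C₄ * s ∧ (∃ y : ℝ, pt a y ∈ P) ∧
  (∀ m ∈ upperSlopes P a, |Real.arctan m| ≤ 4 * Real.pi / 9) ∧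
  (∀ m ∈ lowerSlopes P a, |Real.arctan m| ≤ 4 * Real.pi / 9) ∧
  (∀ m₁ ∈ upperSlopes P (a - C₄ * s), ∀ m₂ ∈ upperSlopes P (a + C₄ * s),
    Real.arctan m₁ - Real.arctan m₂ ≤ 1 / C₃) ∧
  (∀ m₁ ∈ lowerSlopes P (a - C₄ * s), ∀ m₂ ∈ lowerSlopes P (a + C₄ * s),
    Real.arctan m₂ - Real.arctan m₁ ≤ 1 / C₃)

/-- The set `𝒬` of quasi-stable directions. -/
def quasiStable (s : ℝ) : Set E :=
  {u : E | ‖u‖ = 1 ∧ ∃ a b : ℤ, |(a : ℝ)| ≤ s ∧ |(b : ℝ)| ≤ s ∧ pt a b ≠ 0 ∧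
    ∃ c : ℝ, pt a b = c • u}

/-- The (possibly improper) half-plane `{⟨·,u⟩ ≤ l}` for `l ∈ ℝ ∪ {±∞}`. -/
def ehs (u : E) (l : EReal) : Set E := {x : E | (((inner ℝ x u : ℝ) : ℝ) : EReal) ≤ l}

/-- The droplet with radii `l : E → EReal` (indexed by the quasi-stable directions). -/
def dropletOf (s : ℝ) (l : E → EReal) : Set E := ⋂ u ∈ quasiStable s, ehs u (l u)

/-- `D` is a droplet for the quasi-stable directions. -/
def IsDropletQ (s : ℝ) (D : Set E) : Prop := ∃ l : E → EReal, D = dropletOf s l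

/-- The tight radius of `D` in direction `u`. -/
def tight (D : Set E) (u : E) : EReal := sSup ((fun x : E => (((inner ℝ x u : ℝ) : ℝ) : EReal)) '' D)

/-- The `u`-side of a droplet `D`. -/
def uside (u : E) (D : Set E) : Set E := {x ∈ D | ∀ y ∈ D, (inner ℝ y u : ℝ) ≤ (inner ℝ x u : ℝ)}

/-- A non-degenerate droplet: each `u`-side has length at least `C^{1/3}` for unstable
`u ∈ 𝒬` and at least `C^{1/2}` for stable `u ∈ 𝒬`. -/
def IsNondeg (s C : ℝ) (𝒦 : Set E) (r : ℕ) (D : Set E) : Prop :=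
  IsDropletQ s D ∧ ∀ u ∈ quasiStable s,
    (u ∉ stableDirs 𝒦 r → C ^ ((1 : ℝ) / 3) ≤ Metric.diam (uside u D)) ∧
    (u ∈ stableDirs 𝒦 r → C ^ ((1 : ℝ) / 2) ≤ Metric.diam (uside u D))

/-- The droplet obtained from `D` by replacing its tight radius in direction `v` by `m`. -/
def extDroplet (s : ℝ) (v : E) (D : Set E) (m : EReal) : Set E :=
  (⋂ u ∈ quasiStable s \ {v}, ehs u (tight D u)) ∩ ehs v m

/-- `D'` is the `v`-extension of the droplet `D`. -/
def IsExtension (s : ℝ) (v : E) (D D' : Set E) : Prop :=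
  ∃ l' : EReal, tight D v < l' ∧ D' = extDroplet s v D l' ∧
    ((D' \ D) ∩ latt).Nonempty ∧
    ∀ m : EReal, tight D v < m → ((extDroplet s v D m \ D) ∩ latt).Nonempty → l' ≤ m

/-- Rotation of the plane by the angle `θ`. -/
def rotA (θ : ℝ) (u : E) : E :=
  pt (Real.cos θ * u 0 - Real.sin θ * u 1) (Real.sin θ * u 0 + Real.cos θ * u 1)

/-- The closed half-plane `H̄_u(l)`. -/
def hs (u : E) (l : ℝ) : Set E := {x : E | (inner ℝ x u : ℝ) ≤ l}

/-- The open half-plane `ℍ_u(l)`. -/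
def hso (u : E) (l : ℝ) : Set E := {x : E | (inner ℝ x u : ℝ) < l}

/-- Translate of a set. -/
def transl (x : E) (S : Set E) : Set E := (fun y => x + y) '' S

/-- The rectangle `x + (H̄_u ∩ H̄_{u+π/2} ∩ H̄_{u+π}(wid) ∩ H̄_{u-π/2}(len))`. -/
def rectHS (x u : E) (wid len : ℝ) : Set E :=
  transl x (hs u 0 ∩ hs (rotA (Real.pi / 2) u) 0 ∩ hs (rotA Real.pi u) wid ∩
    hs (rotA (-(Real.pi / 2)) u) len)

end

section Aux

lemma pt0 (a b : ℝ) : pt a b 0 = a := by simp [pt]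
lemma pt1 (a b : ℝ) : pt a b 1 = b := by simp [pt]

lemma E_ext {x y : E} (h0 : x 0 = y 0) (h1 : x 1 = y 1) : x = y := by
  ext i; fin_cases i <;> assumption

lemma inner_form (x y : E) : (inner ℝ x y : ℝ) = x 0 * y 0 + x 1 * y 1 := by
  simp [PiLp.inner_apply, Fin.sum_univ_two]; ring

lemma norm_sq_form (x : E) : x 0 * x 0 + x 1 * x 1 = ‖x‖ * ‖x‖ := by
  rw [← real_inner_self_eq_norm_mul_norm, inner_form]

lemma latt_add {x y : E} (hx : x ∈ latt) (hy : y ∈ latt) : x + y ∈ latt := by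
  obtain ⟨a, b, rfl⟩ := hx; obtain ⟨c, d, rfl⟩ := hy
  exact ⟨a + c, b + d, by apply E_ext <;> simp [pt0, pt1]⟩

lemma latt_neg {x : E} (hx : x ∈ latt) : -x ∈ latt := by
  obtain ⟨a, b, rfl⟩ := hx
  exact ⟨-a, -b, by apply E_ext <;> simp [pt0, pt1]⟩

lemma zero_latt : (0 : E) ∈ latt := ⟨0, 0, by apply E_ext <;> simp [pt0, pt1]⟩

lemma abs_coord_le_norm (x : E) (i : Fin 2) : |x i| ≤ ‖x‖ := by
  have h := norm_sq_form x
  have h0 : x i ^ 2 ≤ ‖x‖ ^ 2 := by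
    fin_cases i
    · show x 0 ^ 2 ≤ _; nlinarith [sq_nonneg (x 1)]
    · show x 1 ^ 2 ≤ _; nlinarith [sq_nonneg (x 0)]
  calc |x i| = Real.sqrt (x i ^ 2) := (Real.sqrt_sq_eq_abs _).symm
    _ ≤ Real.sqrt (‖x‖ ^ 2) := Real.sqrt_le_sqrt h0
    _ = ‖x‖ := Real.sqrt_sq (norm_nonneg x)

end Aux
section Aux2

lemma unit_coords {e : E} (he : ‖e‖ = 1) : e 0 ^ 2 + e 1 ^ 2 = 1 := by
  have := norm_sq_form e; rw [he] at this; nlinarith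

/-- Orthonormal decomposition in the plane. -/
lemma decomp {e f : E} (he : ‖e‖ = 1) (hf : ‖f‖ = 1) (hef : (inner ℝ e f : ℝ) = 0) (v : E) :
    v = (inner ℝ v e : ℝ) • e + (inner ℝ v f : ℝ) • f := by
  have he' : e 0 ^ 2 + e 1 ^ 2 = 1 := unit_coords he
  have hf' : f 0 ^ 2 + f 1 ^ 2 = 1 := unit_coords hf
  have hof : e 0 * f 0 + e 1 * f 1 = 0 := by rw [← inner_form]; exact hef
  have h3 : e 0 ^ 2 + f 0 ^ 2 = 1 := by
    linear_combination (e 0 * f 0 - e 1 * f 1) * hof + e 1 ^ 2 * hf' + (1 - f 0 ^ 2) * he'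
  have h3' : e 1 ^ 2 + f 1 ^ 2 = 1 := by
    linear_combination (e 1 * f 1 - e 0 * f 0) * hof + e 0 ^ 2 * hf' + (1 - f 1 ^ 2) * he'
  have h4 : e 0 * e 1 + f 0 * f 1 = 0 := by
    linear_combination (e 0 * f 1 + e 1 * f 0) * hof - e 0 * e 1 * hf' - f 0 * f 1 * he'
  apply E_ext
  · show v 0 = (inner ℝ v e : ℝ) * e 0 + (inner ℝ v f : ℝ) * f 0
    rw [inner_form, inner_form]
    linear_combination (-(v 0)) * h3 - v 1 * h4
  · show v 1 = (inner ℝ v e : ℝ) * e 1 + (inner ℝ v f : ℝ) * f 1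
    rw [inner_form, inner_form]
    linear_combination (-(v 1)) * h3' - v 0 * h4

end Aux2
section Aux3

lemma rot_rot (x : E) : rot (rot x) = -x := by
  apply E_ext <;> simp [rot, pt0, pt1]

lemma K_neg {K : Set E} (hK : NiceK K) {x : E} (hx : x ∈ K) : -x ∈ K := by
  have := hK.rotInv _ (hK.rotInv _ hx)
  rwa [rot_rot] at this

lemma K_zero {K : Set E} (hK : NiceK K) : (0 : E) ∈ K := by
  obtain ⟨k₀, hk₀K, -⟩ := hK.normMax.1
  have h := hK.convex hk₀K (K_neg hK hk₀K) (by norm_num : (0:ℝ) ≤ 1/2)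
    (by norm_num : (0:ℝ) ≤ 1/2) (by norm_num)
  rwa [smul_neg, add_neg_cancel] at h

lemma convex_combo2 {K : Set E} (hconv : Convex ℝ K) {u v : E} (hu : u ∈ K) (hu' : -u ∈ K)
    (hv : v ∈ K) (hv' : -v ∈ K) (h0 : (0 : E) ∈ K) {α β : ℝ} (h : |α| + |β| ≤ 1) :
    α • u + β • v ∈ K := by
  have h1 : ∀ γ : ℝ, ∀ w : E, w ∈ K → -w ∈ K → ∃ w' ∈ K, γ • w = |γ| • w' := by
    intro γ w hw hw'
    rcases le_total 0 γ with hγ | hγ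
    · exact ⟨w, hw, by rw [abs_of_nonneg hγ]⟩
    · exact ⟨-w, hw', by rw [abs_of_nonpos hγ, smul_neg, neg_smul, neg_neg]⟩
  obtain ⟨u', hu'', hueq⟩ := h1 α u hu hu'
  obtain ⟨v', hv'', hveq⟩ := h1 β v hv hv'
  rw [hueq, hveq]
  have hmem := hconv.sum_mem (t := (Finset.univ : Finset (Fin 3)))
    (w := ![|α|, |β|, 1 - |α| - |β|]) (z := ![u', v', 0])
    (by intro i _; fin_cases i
        · exact abs_nonneg α
        · exact abs_nonneg β
        · show (0:ℝ) ≤ 1 - |α| - |β|; linarith)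
    (by simp [Fin.sum_univ_three])
    (by intro i _; fin_cases i <;> simpa)
  simpa [Fin.sum_univ_three, smul_zero] using hmem

/-- The horizontal points `(c, 0)` with `|c| ≤ 1/2` belong to `K`. -/
lemma ptc_mem {K : Set E} (hK : NiceK K) {c : ℝ} (hc : |c| ≤ 1/2) : pt c 0 ∈ K := by
  obtain ⟨k₀, hk₀K, hk₀n⟩ := hK.normMax.1
  have hxy : k₀ 0 ^ 2 + k₀ 1 ^ 2 = 1 := unit_coords hk₀n
  have hxabs : |k₀ 0| ≤ 1 := by nlinarith [sq_abs (k₀ 0), sq_abs (k₀ 1), abs_nonneg (k₀ 0), abs_nonneg (k₀ 1)]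
  have hyabs : |k₀ 1| ≤ 1 := by nlinarith [sq_abs (k₀ 0), sq_abs (k₀ 1), abs_nonneg (k₀ 0), abs_nonneg (k₀ 1)]
  have habs : |c * k₀ 0| + |(-(c * k₀ 1))| ≤ 1 := by
    rw [abs_neg, abs_mul, abs_mul]
    nlinarith [abs_nonneg c, abs_nonneg (k₀ 0), abs_nonneg (k₀ 1)]
  have hmem := convex_combo2 hK.convex hk₀K (K_neg hK hk₀K) (hK.rotInv _ hk₀K)
    (K_neg hK (hK.rotInv _ hk₀K)) (K_zero hK) habs
  have heq : (c * k₀ 0) • k₀ + (-(c * k₀ 1)) • rot k₀ = pt c 0 := by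
    apply E_ext
    · show c * k₀ 0 * k₀ 0 + (-(c * k₀ 1)) * (rot k₀ 0) = pt c 0 0
      rw [pt0]; simp only [rot, pt0]; linear_combination c * hxy
    · show c * k₀ 0 * k₀ 1 + (-(c * k₀ 1)) * (rot k₀ 1) = pt c 0 1
      rw [pt1]; simp only [rot, pt1]; ring
  rwa [heq] at hmem

end Aux3
section Aux4

lemma pt_int_latt (a b : ℤ) : pt (a : ℝ) (b : ℝ) ∈ latt := ⟨a, b, rfl⟩

lemma mem_Ks_pt1 {K : Set E} (hK : NiceK K) {s : ℝ} (hs : 2 ≤ s) : pt 1 0 ∈ Ks K s := by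
  have hs0 : (0:ℝ) < s := by linarith
  constructor
  · refine Set.mem_smul_set.mpr ⟨pt s⁻¹ 0, ptc_mem hK ?_, ?_⟩
    · rw [abs_of_nonneg (by positivity)]
      rw [inv_le_comm₀ hs0 (by norm_num)]; linarith
    · apply E_ext
      · show s * (pt s⁻¹ 0) 0 = pt 1 0 0
        rw [pt0, pt0]; field_simp
      · show s * (pt s⁻¹ 0) 1 = pt 1 0 1
        rw [pt1, pt1]; ring
  · exact ⟨1, 0, by norm_num⟩

lemma mem_Ks_ptm1 {K : Set E} (hK : NiceK K) {s : ℝ} (hs : 2 ≤ s) : pt (-1) 0 ∈ Ks K s := by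
  have hs0 : (0:ℝ) < s := by linarith
  constructor
  · refine Set.mem_smul_set.mpr ⟨pt (-s⁻¹) 0, ptc_mem hK ?_, ?_⟩
    · rw [abs_neg, abs_of_nonneg (by positivity)]
      rw [inv_le_comm₀ hs0 (by norm_num)]; linarith
    · apply E_ext
      · show s * (pt (-s⁻¹) 0) 0 = pt (-1) 0 0
        rw [pt0, pt0]; field_simp
      · show s * (pt (-s⁻¹) 0) 1 = pt (-1) 0 1
        rw [pt1, pt1]; ring
  · exact ⟨-1, 0, by norm_num⟩

lemma mem_Ks_zero {K : Set E} (hK : NiceK K) {s : ℝ} (hs : 2 ≤ s) : (0 : E) ∈ Ks K s :=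
  ⟨Set.mem_smul_set.mpr ⟨0, K_zero hK, smul_zero s⟩, zero_latt⟩

lemma Ks_neg {K : Set E} (hK : NiceK K) {s : ℝ} {x : E} (hx : x ∈ Ks K s) : -x ∈ Ks K s := by
  obtain ⟨hxK, hxl⟩ := hx
  obtain ⟨y, hy, rfl⟩ := Set.mem_smul_set.mp hxK
  exact ⟨Set.mem_smul_set.mpr ⟨-y, K_neg hK hy, by rw [smul_neg]⟩, latt_neg hxl⟩

lemma Ks_norm {K : Set E} (hK : NiceK K) {s : ℝ} (hs : 0 ≤ s) {x : E} (hx : x ∈ Ks K s) :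
    ‖x‖ ≤ s := by
  obtain ⟨y, hy, rfl⟩ := Set.mem_smul_set.mp hx.1
  have : ‖y‖ ≤ 1 := hK.normMax.2 ⟨y, hy, rfl⟩
  rw [norm_smul, Real.norm_eq_abs, abs_of_nonneg hs]
  nlinarith

lemma int_mem_icc {a : ℤ} {R0 : ℝ} (h : |(a : ℝ)| ≤ R0) : a ∈ Set.Icc ⌊-R0⌋ ⌈R0⌉ := by
  obtain ⟨h1, h2⟩ := abs_le.mp h
  constructor
  · have : ((⌊-R0⌋ : ℤ) : ℝ) ≤ (a : ℝ) := le_trans (Int.floor_le _) h1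
    exact_mod_cast this
  · have : (a : ℝ) ≤ ((⌈R0⌉ : ℤ) : ℝ) := le_trans h2 (Int.le_ceil _)
    exact_mod_cast this

lemma coord_sub (x v : E) (i : Fin 2) : (x - v) i = x i - v i := rfl
lemma coord_add (x v : E) (i : Fin 2) : (x + v) i = x i + v i := rfl
lemma coord_smul (c : ℝ) (x : E) (i : Fin 2) : (c • x) i = c * x i := rfl

lemma latt_ball_finite (v : E) (R : ℝ) : {x : E | x ∈ latt ∧ ‖x - v‖ ≤ R}.Finite := by
  have key : {x : E | x ∈ latt ∧ ‖x - v‖ ≤ R} ⊆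
      (fun p : ℤ × ℤ => pt p.1 p.2) ''
        (Set.Icc ⌊-(R + |v 0|)⌋ ⌈R + |v 0|⌉ ×ˢ Set.Icc ⌊-(R + |v 1|)⌋ ⌈R + |v 1|⌉) := by
    rintro x ⟨⟨a, b, rfl⟩, hn⟩
    have bound : ∀ i : Fin 2, |pt (a:ℝ) (b:ℝ) i| ≤ R + |v i| := by
      intro i
      have h1 := abs_coord_le_norm (pt (a:ℝ) (b:ℝ) - v) i
      rw [coord_sub] at h1
      have h3 := abs_sub_abs_le_abs_sub (pt (a:ℝ) (b:ℝ) i) (v i)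
      linarith
    refine ⟨(a, b), ⟨?_, ?_⟩, rfl⟩
    · exact int_mem_icc (by have := bound 0; rwa [pt0] at this)
    · exact int_mem_icc (by have := bound 1; rwa [pt1] at this)
  exact Set.Finite.subset (Set.Finite.image _ ((Set.finite_Icc _ _).prod (Set.finite_Icc _ _))) key

lemma Ks_finite {K : Set E} (hK : NiceK K) {s : ℝ} (hs : 0 ≤ s) : (Ks K s).Finite := by
  apply (latt_ball_finite 0 s).subset
  intro x hx
  exact ⟨hx.2, by rw [sub_zero]; exact Ks_norm hK hs hx⟩

end Aux4
section Aux5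

lemma iter_mono (𝒦 : Set E) (r : ℕ) (X : Set E) {t t' : ℕ} (h : t ≤ t') :
    (step 𝒦 r)^[t] X ⊆ (step 𝒦 r)^[t'] X := by
  induction h with
  | refl => exact subset_rfl
  | step h ih =>
      refine ih.trans ?_
      rw [Function.iterate_succ_apply']
      exact Set.subset_union_left

lemma exists_uniform (𝒦 : Set E) (r : ℕ) (X : Set E) {S : Set E} (hS : S.Finite) :
    S ⊆ (⋃ t : ℕ, (step 𝒦 r)^[t] X) → ∃ t, S ⊆ (step 𝒦 r)^[t] X := by
  refine Set.Finite.induction_on (motive := fun S _ => S ⊆ (⋃ t : ℕ, (step 𝒦 r)^[t] X) → ∃ t, S ⊆ (step 𝒦 r)^[t] X) S hS (fun _ => ⟨0, Set.empty_subset _⟩) ?_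
  intro a s _ _ ih h
  obtain ⟨ts, hts⟩ := ih ((Set.subset_insert a s).trans h)
  obtain ⟨ta, hta⟩ := Set.mem_iUnion.mp (h (Set.mem_insert a s))
  refine ⟨max ta ts, Set.insert_subset ?_ (hts.trans (iter_mono _ _ _ (le_max_right _ _)))⟩
  exact iter_mono _ _ _ (le_max_left ta ts) hta

end Aux5
section Aux6

lemma inner_zero_zero {e f : E} (he : ‖e‖ = 1) (hf : ‖f‖ = 1) (hef : (inner ℝ e f : ℝ) = 0)
    {k : E} (h1 : (inner ℝ k e : ℝ) = 0) (h2 : (inner ℝ k f : ℝ) = 0) : k = 0 := by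
  have h := decomp he hf hef k
  rw [h1, h2, zero_smul, zero_smul, add_zero] at h
  exact h

lemma neg_image_set {K : Set E} (hK : NiceK K) {s : ℝ} {P Q : E → Prop}
    (hPQ : ∀ x, x ∈ Ks K s → (P x ↔ Q (-x))) (hQP : ∀ x, x ∈ Ks K s → (Q x ↔ P (-x))) :
    {k : E | k ∈ Ks K s ∧ Q k} = (fun x : E => -x) '' {k : E | k ∈ Ks K s ∧ P k} := by
  ext x
  constructor
  · rintro ⟨hx, hQ⟩
    exact ⟨-x, ⟨Ks_neg hK hx, (hQP x hx).mp hQ⟩, neg_neg x⟩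
  · rintro ⟨y, ⟨hy, hP⟩, rfl⟩
    exact ⟨Ks_neg hK hy, (hPQ y hy).mp hP⟩

/-- The key counting bound: the threshold `r_s` is at most the number of points of `𝒦_s`
in the half-open half-plane determined by the directions `f` (then `e`). -/
lemma rKs_le_cardS {K : Set E} (hK : NiceK K) {s : ℝ} (hs : 2 ≤ s) {e f : E}
    (he : ‖e‖ = 1) (hf : ‖f‖ = 1) (hef : (inner ℝ e f : ℝ) = 0) :
    rKs K s ≤ {k : E | k ∈ Ks K s ∧ ((inner ℝ k f : ℝ) < 0 ∨
      ((inner ℝ k f : ℝ) = 0 ∧ (inner ℝ k e : ℝ) < 0))}.ncard := by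
  have hfin : (Ks K s).Finite := Ks_finite hK (by linarith)
  set u₀ : E := pt 0 1 with hu₀
  have hinner_u₀ : ∀ x : E, (inner ℝ x u₀ : ℝ) = x 1 := by
    intro x; rw [inner_form, hu₀, pt0, pt1]; ring
  -- the sets
  set S : Set E := {k : E | k ∈ Ks K s ∧ ((inner ℝ k f : ℝ) < 0 ∨
      ((inner ℝ k f : ℝ) = 0 ∧ (inner ℝ k e : ℝ) < 0))} with hS
  set S' : Set E := {k : E | k ∈ Ks K s ∧ ((0 : ℝ) < (inner ℝ k f : ℝ) ∨
      ((inner ℝ k f : ℝ) = 0 ∧ (0 : ℝ) < (inner ℝ k e : ℝ)))} with hS'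
  set P : Set E := {x : E | x ∈ Ks K s ∧ (inner ℝ x u₀ : ℝ) < 0} with hP
  set P' : Set E := {x : E | x ∈ Ks K s ∧ (0 : ℝ) < (inner ℝ x u₀ : ℝ)} with hP'
  set Z : Set E := {x : E | x ∈ Ks K s ∧ (inner ℝ x u₀ : ℝ) = 0} with hZ
  have hSfin : S.Finite := hfin.subset (fun x hx => hx.1)
  have hS'fin : S'.Finite := hfin.subset (fun x hx => hx.1)
  have hPfin : P.Finite := hfin.subset (fun x hx => hx.1)
  have hP'fin : P'.Finite := hfin.subset (fun x hx => hx.1)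
  have hZfin : Z.Finite := hfin.subset (fun x hx => hx.1)
  -- S' is the negation of S
  have hS'S : S'.ncard = S.ncard := by
    have := neg_image_set hK (s := s)
      (P := fun k => ((inner ℝ k f : ℝ) < 0 ∨ ((inner ℝ k f : ℝ) = 0 ∧ (inner ℝ k e : ℝ) < 0)))
      (Q := fun k => ((0 : ℝ) < (inner ℝ k f : ℝ) ∨ ((inner ℝ k f : ℝ) = 0 ∧ (0 : ℝ) < (inner ℝ k e : ℝ))))
      (fun x _ => by
        simp only [inner_neg_left]
        constructor <;>
        · rintro (h | ⟨h1, h2⟩)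
          · exact Or.inl (by linarith)
          · exact Or.inr ⟨by linarith, by linarith⟩)
      (fun x _ => by
        simp only [inner_neg_left]
        constructor <;>
        · rintro (h | ⟨h1, h2⟩)
          · exact Or.inl (by linarith)
          · exact Or.inr ⟨by linarith, by linarith⟩)
    rw [hS', hS, this, Set.ncard_image_of_injective _ neg_injective]
  have hP'P : P'.ncard = P.ncard := by
    have := neg_image_set hK (s := s)
      (P := fun k => ((inner ℝ k u₀ : ℝ) < 0)) (Q := fun k => ((0 : ℝ) < (inner ℝ k u₀ : ℝ)))
      (fun x _ => by simp only [inner_neg_left]; constructor <;> intro h <;> linarith)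
      (fun x _ => by simp only [inner_neg_left]; constructor <;> intro h <;> linarith)
    rw [hP', hP, this, Set.ncard_image_of_injective _ neg_injective]
  -- partitions
  have hpart1 : Ks K s = S ∪ S' ∪ {0} := by
    ext k
    constructor
    · intro hk
      rcases lt_trichotomy ((inner ℝ k f : ℝ)) 0 with h | h | h
      · exact Or.inl (Or.inl ⟨hk, Or.inl h⟩)
      · rcases lt_trichotomy ((inner ℝ k e : ℝ)) 0 with h' | h' | h'
        · exact Or.inl (Or.inl ⟨hk, Or.inr ⟨h, h'⟩⟩)
        · exact Or.inr (inner_zero_zero he hf hef h' h)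
        · exact Or.inl (Or.inr ⟨hk, Or.inr ⟨h, h'⟩⟩)
      · exact Or.inl (Or.inr ⟨hk, Or.inl h⟩)
    · rintro ((⟨hk, -⟩ | ⟨hk, -⟩) | rfl)
      · exact hk
      · exact hk
      · exact mem_Ks_zero hK hs
  have hpart2 : Ks K s = P ∪ P' ∪ Z := by
    ext k
    constructor
    · intro hk
      rcases lt_trichotomy ((inner ℝ k u₀ : ℝ)) 0 with h | h | h
      · exact Or.inl (Or.inl ⟨hk, h⟩)
      · exact Or.inr ⟨hk, h⟩
      · exact Or.inl (Or.inr ⟨hk, h⟩)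
    · rintro ((⟨hk, -⟩ | ⟨hk, -⟩) | ⟨hk, -⟩) <;> exact hk
  -- cardinalities
  have hd1 : Disjoint (S ∪ S') ({0} : Set E) := by
    rw [Set.disjoint_singleton_right]
    intro h0
    have hz : (inner ℝ (0:E) f : ℝ) = 0 := inner_zero_left f
    have hz' : (inner ℝ (0:E) e : ℝ) = 0 := inner_zero_left e
    rcases h0 with ⟨-, h | ⟨h1, h2⟩⟩ | ⟨-, h | ⟨h1, h2⟩⟩ <;> linarith
  have hd2 : Disjoint S S' := by
    rw [Set.disjoint_left]
    rintro k ⟨-, h | ⟨h1, h2⟩⟩ ⟨-, h' | ⟨h1', h2'⟩⟩ <;> linarith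
  have hd3 : Disjoint (P ∪ P') Z := by
    rw [Set.disjoint_left]
    rintro k (⟨-, h⟩ | ⟨-, h⟩) ⟨-, h'⟩ <;> linarith
  have hd4 : Disjoint P P' := by
    rw [Set.disjoint_left]
    rintro k ⟨-, h⟩ ⟨-, h'⟩; linarith
  have hc1 : (Ks K s).ncard = S.ncard + S'.ncard + 1 := by
    rw [hpart1, Set.ncard_union_eq hd1 (hSfin.union hS'fin) (Set.finite_singleton 0),
      Set.ncard_union_eq hd2 hSfin hS'fin, Set.ncard_singleton]
  have hc2 : (Ks K s).ncard = P.ncard + P'.ncard + Z.ncard := by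
    rw [hpart2, Set.ncard_union_eq hd3 (hPfin.union hP'fin) hZfin,
      Set.ncard_union_eq hd4 hPfin hP'fin]
  -- Z has at least 3 elements
  have htriple : ({0, pt 1 0, pt (-1) 0} : Set E) ⊆ Z := by
    rintro k (rfl | rfl | rfl)
    · exact ⟨mem_Ks_zero hK hs, by rw [inner_zero_left]⟩
    · exact ⟨mem_Ks_pt1 hK hs, by rw [hinner_u₀, pt1]⟩
    · exact ⟨mem_Ks_ptm1 hK hs, by rw [hinner_u₀, pt1]⟩
  have hne1 : pt 1 0 ≠ (0 : E) := by
    intro h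
    have := congrArg (fun x : E => x 0) h
    simp only [pt0] at this
    norm_num at this
  have hne2 : pt (-1) 0 ≠ (0 : E) := by
    intro h
    have := congrArg (fun x : E => x 0) h
    simp only [pt0] at this
    norm_num at this
  have hne3 : pt 1 0 ≠ pt (-1) 0 := by
    intro h
    have := congrArg (fun x : E => x 0) h
    simp only [pt0] at this
    norm_num at this
  have hZ3 : 3 ≤ Z.ncard := by
    have h3 : ({0, pt 1 0, pt (-1) 0} : Set E).ncard = 3 := by
      rw [Set.ncard_insert_of_notMem (by
            simp only [Set.mem_insert_iff, Set.mem_singleton_iff]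
            push_neg
            exact ⟨hne1.symm, hne2.symm⟩),
        Set.ncard_insert_of_notMem (by simpa using hne3), Set.ncard_singleton]
    calc 3 = ({0, pt 1 0, pt (-1) 0} : Set E).ncard := h3.symm
      _ ≤ Z.ncard := Set.ncard_le_ncard htriple hZfin
  -- conclude
  have hsInf : sInf ((fun u : E => {x : E | x ∈ Ks K s ∧ (inner ℝ x u : ℝ) < 0}.ncard) ''
      {u : E | u ≠ 0}) ≤ P.ncard := by
    apply Nat.sInf_le
    refine ⟨u₀, ?_, rfl⟩
    intro h
    have := congrArg (fun x : E => x 1) h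
    simp only [hu₀, pt1] at this
    norm_num at this
  have : rKs K s ≤ 1 + P.ncard := by
    rw [rKs]; omega
  omega

end Aux6
theorem statement_12 (K : Set E) (hK : NiceK K) :
    ∃ s₀ : ℝ, ∀ s : ℝ, s₀ ≤ s → ∀ ε : ℝ, 0 < ε → ∀ α : ℝ, 2 < α →
      ∀ a e f : E, ‖e‖ = 1 → ‖f‖ = 1 → (inner ℝ e f : ℝ) = 0 →
        {x : E | ∃ c₁ ∈ Icc (0 : ℝ) (α * s), ∃ c₂ ∈ Icc (-s) (ε * s),
            x = a + c₁ • e + c₂ • f} ∩ latt ⊆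
          bpCl (Ks K s) (rKs K s)
            ({x : E | ∃ c₁ ∈ Icc (0 : ℝ) (α * s), ∃ c₂ ∈ Icc (-s) (0 : ℝ),
                x = a + c₁ • e + c₂ • f} ∪
             {x : E | ∃ c₁ ∈ Icc (0 : ℝ) s, ∃ c₂ ∈ Icc (0 : ℝ) (ε * s),
                x = a + c₁ • e + c₂ • f} ∪
             {x : E | ∃ c₁ ∈ Icc ((α - 1) * s) (α * s), ∃ c₂ ∈ Icc (0 : ℝ) (ε * s),
                x = a + c₁ • e + c₂ • f}) := by
  refine ⟨2, fun s hs ε hε α hα a e f he hf hef => ?_⟩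
  have hs0 : (0 : ℝ) < s := by linarith
  set A : Set E :=
      {x : E | ∃ c₁ ∈ Icc (0 : ℝ) (α * s), ∃ c₂ ∈ Icc (-s) (0 : ℝ),
          x = a + c₁ • e + c₂ • f} ∪
       {x : E | ∃ c₁ ∈ Icc (0 : ℝ) s, ∃ c₂ ∈ Icc (0 : ℝ) (ε * s),
          x = a + c₁ • e + c₂ • f} ∪
       {x : E | ∃ c₁ ∈ Icc ((α - 1) * s) (α * s), ∃ c₂ ∈ Icc (0 : ℝ) (ε * s),
          x = a + c₁ • e + c₂ • f} with hA
  set B : Set E := bpCl (Ks K s) (rKs K s) A with hB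
  set T : Set E := {x : E | ∃ c₁ ∈ Icc (0 : ℝ) (α * s), ∃ c₂ ∈ Icc (-s) (ε * s),
      x = a + c₁ • e + c₂ • f} ∩ latt with hT
  -- inner products recover the coefficients
  have hfe : (inner ℝ f e : ℝ) = 0 := by rw [real_inner_comm]; exact hef
  have coord_e : ∀ c₁ c₂ : ℝ, (inner ℝ (c₁ • e + c₂ • f) e : ℝ) = c₁ := by
    intro c₁ c₂
    rw [inner_add_left, real_inner_smul_left, real_inner_smul_left,
      real_inner_self_eq_norm_mul_norm, he, hfe]
    ring
  have coord_f : ∀ c₁ c₂ : ℝ, (inner ℝ (c₁ • e + c₂ • f) f : ℝ) = c₂ := by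
    intro c₁ c₂
    rw [inner_add_left, real_inner_smul_left, real_inner_smul_left,
      real_inner_self_eq_norm_mul_norm, hf, hef]
    ring
  -- T is finite
  have hTfin : T.Finite := by
    apply (latt_ball_finite a (α * s + (s + ε * s))).subset
    rintro x ⟨⟨c₁, hc₁, c₂, hc₂, rfl⟩, hxl⟩
    refine ⟨hxl, ?_⟩
    have : a + c₁ • e + c₂ • f - a = c₁ • e + c₂ • f := by abel
    rw [this]
    calc ‖c₁ • e + c₂ • f‖ ≤ ‖c₁ • e‖ + ‖c₂ • f‖ := norm_add_le _ _
      _ = |c₁| + |c₂| := by rw [norm_smul, norm_smul, he, hf, Real.norm_eq_abs,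
            Real.norm_eq_abs, mul_one, mul_one]
      _ ≤ α * s + (s + ε * s) := by
          have h1 : |c₁| ≤ α * s := abs_le.mpr ⟨by nlinarith [hc₁.1, mul_pos (show (0:ℝ) < α by linarith) hs0], hc₁.2⟩
          have h2 : |c₂| ≤ s + ε * s := abs_le.mpr
            ⟨by nlinarith [hc₂.1, mul_pos hε hs0], by nlinarith [hc₂.2, mul_pos hε hs0]⟩
          linarith
  -- A ∩ latt ⊆ B
  have hAB : A ∩ latt ⊆ B := fun x hx => Set.mem_iUnion.mpr ⟨0, by simpa using hx⟩
  -- main argument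
  intro x₀ hx₀
  by_contra hx₀B
  have hZne : (T \ B).Nonempty := ⟨x₀, hx₀, hx₀B⟩
  have hZfin : (T \ B).Finite := hTfin.subset Set.diff_subset
  obtain ⟨z₀, hz₀, hz₀min⟩ := Set.exists_min_image (T \ B) (fun y => (inner ℝ y f : ℝ)) hZfin hZne
  set Z' : Set E := {y ∈ T \ B | (inner ℝ y f : ℝ) = (inner ℝ z₀ f : ℝ)} with hZ'
  obtain ⟨z, hz, hzmin⟩ := Set.exists_min_image Z' (fun y => (inner ℝ y e : ℝ))
    (hZfin.subset (fun y hy => hy.1)) ⟨z₀, hz₀, rfl⟩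
  obtain ⟨⟨hzT, hzB⟩, hzf⟩ := hz
  have hminf : ∀ y ∈ T \ B, (inner ℝ z f : ℝ) ≤ (inner ℝ y f : ℝ) := by
    intro y hy; rw [hzf]; exact hz₀min y hy
  have hmine : ∀ y ∈ T \ B, (inner ℝ y f : ℝ) = (inner ℝ z f : ℝ) → (inner ℝ z e : ℝ) ≤ (inner ℝ y e : ℝ) := by
    intro y hy hyf
    exact hzmin y ⟨hy, by rw [hyf, hzf]⟩
  -- coordinates of z
  obtain ⟨⟨c₁, hc₁, c₂, hc₂, hzeq⟩, hzl⟩ := hzT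
  -- z is not initially infected
  have hzA : z ∉ A := fun h => hzB (hAB ⟨h, hzl⟩)
  have hεs : 0 < ε * s := mul_pos hε hs0
  have hc₂pos : 0 < c₂ := by
    by_contra h
    push_neg at h
    exact hzA (Or.inl (Or.inl ⟨c₁, hc₁, c₂, ⟨hc₂.1, h⟩, hzeq⟩))
  have hc₁s : s < c₁ := by
    by_contra h
    push_neg at h
    exact hzA (Or.inl (Or.inr ⟨c₁, ⟨hc₁.1, h⟩, c₂, ⟨le_of_lt hc₂pos, hc₂.2⟩, hzeq⟩))
  have hc₁s' : c₁ < (α - 1) * s := by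
    by_contra h
    push_neg at h
    exact hzA (Or.inr ⟨c₁, ⟨h, hc₁.2⟩, c₂, ⟨le_of_lt hc₂pos, hc₂.2⟩, hzeq⟩)
  -- the half-open half-plane of the neighbourhood
  set S : Set E := {k : E | k ∈ Ks K s ∧ ((inner ℝ k f : ℝ) < 0 ∨
      ((inner ℝ k f : ℝ) = 0 ∧ (inner ℝ k e : ℝ) < 0))} with hSdef
  have hScard : rKs K s ≤ S.ncard := rKs_le_cardS hK hs he hf hef
  have hKsfin : (Ks K s).Finite := Ks_finite hK (by linarith)
  have hSfin : S.Finite := hKsfin.subset (fun k hk => hk.1)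
  -- every translate z + k, k ∈ S, is already infected
  have hSsubB : ∀ k ∈ S, z + k ∈ B := by
    rintro k ⟨hkKs, hkcond⟩
    have hknorm : ‖k‖ ≤ s := Ks_norm hK (by linarith) hkKs
    have hke : |(inner ℝ k e : ℝ)| ≤ s := by
      calc |(inner ℝ k e : ℝ)| ≤ ‖k‖ * ‖e‖ := abs_real_inner_le_norm k e
        _ ≤ s := by rw [he, mul_one]; exact hknorm
    have hkf : |(inner ℝ k f : ℝ)| ≤ s := by
      calc |(inner ℝ k f : ℝ)| ≤ ‖k‖ * ‖f‖ := abs_real_inner_le_norm k f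
        _ ≤ s := by rw [hf, mul_one]; exact hknorm
    have hkdec := decomp he hf hef k
    have hyeq : z + k = a + (c₁ + (inner ℝ k e : ℝ)) • e + (c₂ + (inner ℝ k f : ℝ)) • f := by
      have hstep : a + (c₁ + (inner ℝ k e : ℝ)) • e + (c₂ + (inner ℝ k f : ℝ)) • f =
          (a + c₁ • e + c₂ • f) + ((inner ℝ k e : ℝ) • e + (inner ℝ k f : ℝ) • f) := by
        rw [add_smul, add_smul]; abel
      rw [hstep, ← hzeq, ← hkdec]
    have hyT : z + k ∈ T := by
      refine ⟨⟨c₁ + (inner ℝ k e : ℝ), ⟨?_, ?_⟩, c₂ + (inner ℝ k f : ℝ), ⟨?_, ?_⟩, hyeq⟩,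
        latt_add hzl hkKs.2⟩
      · have := abs_le.mp hke; linarith [this.1]
      · have := abs_le.mp hke; linarith [this.2]
      · have := abs_le.mp hkf
        rcases hkcond with h | ⟨h, -⟩ <;> linarith [this.1]
      · have := abs_le.mp hkf
        rcases hkcond with h | ⟨h, -⟩ <;> linarith [hc₂.2]
    by_contra hyB
    have hyZ : z + k ∈ T \ B := ⟨hyT, hyB⟩
    have hyf : (inner ℝ (z + k) f : ℝ) = (inner ℝ z f : ℝ) + (inner ℝ k f : ℝ) := inner_add_left z k f
    rcases hkcond with h | ⟨h1, h2⟩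
    · have := hminf _ hyZ
      rw [hyf] at this
      linarith
    · have := hmine _ hyZ (by rw [hyf, h1, add_zero])
      have hye : (inner ℝ (z + k) e : ℝ) = (inner ℝ z e : ℝ) + (inner ℝ k e : ℝ) := inner_add_left z k e
      rw [hye] at this
      linarith
  -- extract a uniform time
  obtain ⟨t, ht⟩ := exists_uniform (Ks K s) (rKs K s) (A ∩ latt)
    (hSfin.image (fun k => z + k))
    (by rintro y ⟨k, hk, rfl⟩; exact hSsubB k hk)
  -- z becomes infected at time t+1
  have hzstep : z ∈ (step (Ks K s) (rKs K s))^[t + 1] (A ∩ latt) := by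
    rw [Function.iterate_succ_apply']
    refine Or.inr ⟨hzl, ?_⟩
    have hsub : (fun k => z + k) '' S ⊆
        ((fun k => z + k) '' Ks K s) ∩ (step (Ks K s) (rKs K s))^[t] (A ∩ latt) := by
      rintro y ⟨k, hk, rfl⟩
      exact ⟨⟨k, hk.1, rfl⟩, ht ⟨k, hk, rfl⟩⟩
    calc rKs K s ≤ S.ncard := hScard
      _ = ((fun k => z + k) '' S).ncard :=
          (Set.ncard_image_of_injective S (add_right_injective z)).symm
      _ ≤ _ := Set.ncard_le_ncard hsub
          (((hKsfin.image _).inter_of_left _))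
  exact hzB (Set.mem_iUnion.mpr ⟨t + 1, hzstep⟩)
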